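/- For t uniform on [0, T_rep] with T_rep > T_ofdm, T_ofdm < T_pil, pilots at [k*T_pil, k*T_pil + T_ofdm] for k = 0,...,N_p−1, and radar arrivals t + j*T_rep required to lie in [0, N_p*T_pil]: the expected number of interfered pilots is at most N_p * T_ofdm / T_rep. -/

import Mathlib

open MeasureTheory Set
open scoped Classical

lemma vol_hit_bound (a T_ofdm T_rep B : ℝ) (hofdm : 0 < T_ofdm) (hrep : 0 < T_rep) :
    volume {t : ℝ | t ∈ Icc (0:ℝ) T_rep ∧
      ∃ j : ℕ, t + j * T_rep ∈ Icc a (a + T_ofdm) ∩ Icc 0 B} ≤ ENNReal.ofReal T_ofdm := by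
  set I : Set ℝ := Icc a (a + T_ofdm) with hI
  set E : ℕ → Set ℝ := fun j => (fun t => t + (j:ℝ) * T_rep) ⁻¹'
      (I ∩ Icc ((j:ℝ) * T_rep) ((j:ℝ) * T_rep + T_rep)) with hE
  set g : ℕ → Set ℝ := fun j => I ∩ Ico ((j:ℝ) * T_rep) ((j:ℝ) * T_rep + T_rep) with hg
  have hsub : {t : ℝ | t ∈ Icc (0:ℝ) T_rep ∧
      ∃ j : ℕ, t + j * T_rep ∈ I ∩ Icc 0 B} ⊆ ⋃ j, E j := by
    rintro t ⟨⟨ht0, htT⟩, j, ⟨htI, _⟩⟩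
    refine Set.mem_iUnion.2 ⟨j, htI, ?_, ?_⟩ <;> dsimp only <;> linarith
  have hEj : ∀ j, volume (E j) = volume (I ∩ Icc ((j:ℝ) * T_rep) ((j:ℝ) * T_rep + T_rep)) := by
    intro j
    exact measure_preimage_add_right volume _ _
  have hEg : ∀ j, volume (E j) ≤ volume (g j) := by
    intro j
    rw [hEj j]
    have h1 : I ∩ Icc ((j:ℝ) * T_rep) ((j:ℝ) * T_rep + T_rep) ⊆
        g j ∪ {(j:ℝ) * T_rep + T_rep} := by
      rintro t ⟨htI, ht1, ht2⟩
      rcases lt_or_eq_of_le ht2 with h | h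
      · exact Or.inl ⟨htI, ht1, h⟩
      · exact Or.inr h
    calc volume (I ∩ Icc ((j:ℝ) * T_rep) ((j:ℝ) * T_rep + T_rep))
        ≤ volume (g j ∪ {(j:ℝ) * T_rep + T_rep}) := measure_mono h1
      _ ≤ volume (g j) + volume ({(j:ℝ) * T_rep + T_rep} : Set ℝ) := measure_union_le _ _
      _ = volume (g j) := by simp
  have hgdisj : Pairwise (Function.onFun Disjoint g) := by
    intro i j hij
    have : Disjoint (Ico ((i:ℝ) * T_rep) ((i:ℝ) * T_rep + T_rep))
        (Ico ((j:ℝ) * T_rep) ((j:ℝ) * T_rep + T_rep)) := by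
      rcases hij.lt_or_gt with h | h
      · apply Set.Ico_disjoint_Ico.2
        have h1 : (i:ℝ) + 1 ≤ (j:ℝ) := by exact_mod_cast h
        have h2 := mul_le_mul_of_nonneg_right h1 hrep.le
        exact min_le_of_left_le (le_max_of_le_right (by nlinarith))
      · apply Set.Ico_disjoint_Ico.2
        have h1 : (j:ℝ) + 1 ≤ (i:ℝ) := by exact_mod_cast h
        have h2 := mul_le_mul_of_nonneg_right h1 hrep.le
        exact min_le_of_right_le (le_max_of_le_left (by nlinarith))
    exact (this.inter_right' I).inter_left' I
  have hgmeas : ∀ j, MeasurableSet (g j) := fun j =>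
    (measurableSet_Icc).inter measurableSet_Ico
  calc volume {t : ℝ | t ∈ Icc (0:ℝ) T_rep ∧
        ∃ j : ℕ, t + j * T_rep ∈ I ∩ Icc 0 B}
      ≤ volume (⋃ j, E j) := measure_mono hsub
    _ ≤ ∑' j, volume (E j) := measure_iUnion_le _
    _ ≤ ∑' j, volume (g j) := ENNReal.tsum_le_tsum hEg
    _ = volume (⋃ j, g j) := (measure_iUnion hgdisj hgmeas).symm
    _ ≤ volume I := measure_mono (Set.iUnion_subset fun j => Set.inter_subset_left)
    _ = ENNReal.ofReal T_ofdm := by rw [hI, Real.volume_Icc]; ring_nf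

theorem stmt15
    (T_ofdm T_pil T_rep : ℝ) (N_p : ℕ)
    (hofdm : 0 < T_ofdm) (hop : T_ofdm < T_pil) (hrep : T_ofdm < T_rep) (hNp : 0 < N_p) :
    (∫ t in Icc (0:ℝ) T_rep,
      (((Finset.range N_p).filter (fun (k : ℕ) =>
        ∃ j : ℕ, t + j * T_rep ∈
          Icc ((k:ℝ) * T_pil) ((k:ℝ) * T_pil + T_ofdm) ∩ Icc 0 ((N_p:ℝ) * T_pil))).card : ℝ))
      / T_rep
      ≤ N_p * T_ofdm / T_rep := by
  have hT : 0 < T_rep := hofdm.trans hrep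
  set P : ℕ → ℝ → Prop := fun k t =>
    ∃ j : ℕ, t + j * T_rep ∈
      Icc ((k:ℝ) * T_pil) ((k:ℝ) * T_pil + T_ofdm) ∩ Icc 0 ((N_p:ℝ) * T_pil) with hP
  have hmeasP : ∀ k, MeasurableSet {t : ℝ | P k t} := by
    intro k
    have : {t : ℝ | P k t} = ⋃ j : ℕ, (fun t => t + (j:ℝ) * T_rep) ⁻¹'
        (Icc ((k:ℝ) * T_pil) ((k:ℝ) * T_pil + T_ofdm) ∩ Icc 0 ((N_p:ℝ) * T_pil)) := by
      ext t; simp only [hP, Set.mem_setOf_eq, Set.mem_iUnion, Set.mem_preimage]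
    rw [this]
    exact MeasurableSet.iUnion fun j =>
      (measurableSet_Icc.inter measurableSet_Icc).preimage (measurable_add_const _)
  have key : (∫ t in Icc (0:ℝ) T_rep,
      (((Finset.range N_p).filter (fun k => P k t)).card : ℝ)) ≤ N_p * T_ofdm := by
    have hfun : ∀ t, (((Finset.range N_p).filter (fun k => P k t)).card : ℝ)
        = ∑ k ∈ Finset.range N_p, Set.indicator {t : ℝ | P k t} (fun _ => (1:ℝ)) t := by
      intro t
      rw [Finset.card_filter]
      push_cast
      refine Finset.sum_congr rfl fun k _ => ?_
      by_cases h : P k t <;> simp [h, Set.indicator_apply]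
    have hint : ∀ k ∈ Finset.range N_p,
        Integrable (fun t => Set.indicator {t : ℝ | P k t} (fun _ => (1:ℝ)) t)
          (volume.restrict (Icc (0:ℝ) T_rep)) := by
      intro k _
      rw [integrable_indicator_iff (hmeasP k)]
      refine integrableOn_const (ne_of_lt ?_)
      rw [Measure.restrict_apply (hmeasP k)]
      calc volume ({t : ℝ | P k t} ∩ Icc (0:ℝ) T_rep)
          ≤ volume (Icc (0:ℝ) T_rep) := measure_mono Set.inter_subset_right
        _ < ⊤ := by rw [Real.volume_Icc]; exact ENNReal.ofReal_lt_top
    calc (∫ t in Icc (0:ℝ) T_rep, (((Finset.range N_p).filter (fun k => P k t)).card : ℝ))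
        = ∫ t in Icc (0:ℝ) T_rep,
            ∑ k ∈ Finset.range N_p, Set.indicator {t : ℝ | P k t} (fun _ => (1:ℝ)) t := by
          exact integral_congr_ae (Filter.Eventually.of_forall fun t => hfun t)
      _ = ∑ k ∈ Finset.range N_p, ∫ t in Icc (0:ℝ) T_rep,
            Set.indicator {t : ℝ | P k t} (fun _ => (1:ℝ)) t := integral_finset_sum _ hint
      _ ≤ ∑ k ∈ Finset.range N_p, T_ofdm := by
          refine Finset.sum_le_sum fun k _ => ?_
          rw [integral_indicator (hmeasP k), setIntegral_const, smul_eq_mul, mul_one,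
            measureReal_def, Measure.restrict_apply (hmeasP k)]
          have hb : volume ({t : ℝ | P k t} ∩ Icc (0:ℝ) T_rep) ≤ ENNReal.ofReal T_ofdm := by
            have := vol_hit_bound ((k:ℝ) * T_pil) T_ofdm T_rep ((N_p:ℝ) * T_pil) hofdm hT
            refine le_trans (measure_mono ?_) this
            rintro t ⟨h1, h2⟩; exact ⟨h2, h1⟩
          exact ENNReal.toReal_le_of_le_ofReal hofdm.le hb
      _ = N_p * T_ofdm := by rw [Finset.sum_const, Finset.card_range, nsmul_eq_mul]
  gcongr
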